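/- Let k > 0 and a, b ∈ ℝ with (|a|^{2/3} + |b|^{2/3})^{3/2} < k. Set Θ := (|a|^{2/3} + |b|^{2/3})^{3/2}. Then for every n ∈ ℕ, all continuous inputs u, w : [0,∞) → ℝ, every ξ = (ξ_1,…,ξ_n) ∈ ℝ^n, and every solution (x_1,…,x_n) of the linear string x_i'(t) = a·x_{i−1}(t) − k·x_i(t) + b·x_{i+1}(t) (with x_0 := u, x_{n+1} := w) and x_i(0) = ξ_i, the estimate ‖x_i‖_{[0,t],2} ≤ (|a|^{2/3}(|a|^{2/3}+|b|^{2/3})^{1/2}/(k − Θ))·‖u‖_{[0,t],2} + (|b|^{2/3}(|a|^{2/3}+|b|^{2/3})^{1/2}/(k − Θ))·‖w‖_{[0,t],2} + (k^{1/2}/(k − Θ))·max_{j=1,…,n} |ξ_j| holds for all t ≥ 0 and all i = 1,…,n. -/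

import Mathlib

/-- The `L²` norm of a real-valued signal on the interval `[0, t]`. -/
noncomputable def l2Norm (y : ℝ → ℝ) (t : ℝ) : ℝ :=
  Real.sqrt (∫ s in (0:ℝ)..t, (y s) ^ 2)

lemma cs_interval (f g : ℝ → ℝ) (t : ℝ) (ht : 0 ≤ t)
    (hf : ContinuousOn f (Set.Icc 0 t)) (hg : ContinuousOn g (Set.Icc 0 t)) :
    |∫ s in (0:ℝ)..t, f s * g s| ≤
      Real.sqrt (∫ s in (0:ℝ)..t, f s ^ 2) * Real.sqrt (∫ s in (0:ℝ)..t, g s ^ 2) := by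
  have huIcc : Set.uIcc (0:ℝ) t = Set.Icc 0 t := Set.uIcc_of_le ht
  have hif : IntervalIntegrable (fun s => f s ^ 2) MeasureTheory.volume 0 t :=
    ContinuousOn.intervalIntegrable (by rw [huIcc]; exact hf.pow 2)
  have hig : IntervalIntegrable (fun s => g s ^ 2) MeasureTheory.volume 0 t :=
    ContinuousOn.intervalIntegrable (by rw [huIcc]; exact hg.pow 2)
  have hifg : IntervalIntegrable (fun s => f s * g s) MeasureTheory.volume 0 t :=
    ContinuousOn.intervalIntegrable (by rw [huIcc]; exact hf.mul hg)
  set A := ∫ s in (0:ℝ)..t, f s ^ 2 with hAdef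
  set C := ∫ s in (0:ℝ)..t, g s ^ 2 with hCdef
  set B := ∫ s in (0:ℝ)..t, f s * g s with hBdef
  have hA : 0 ≤ A := intervalIntegral.integral_nonneg ht (fun s _ => sq_nonneg _)
  have hC : 0 ≤ C := intervalIntegral.integral_nonneg ht (fun s _ => sq_nonneg _)
  have hquad : ∀ lam : ℝ, 0 ≤ A * (lam * lam) + (2 * B) * lam + C := by
    intro lam
    have h1 : (0:ℝ) ≤ ∫ s in (0:ℝ)..t, (lam * f s + g s) ^ 2 :=
      intervalIntegral.integral_nonneg ht (fun s _ => sq_nonneg _)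
    have h2 : (∫ s in (0:ℝ)..t, (lam * f s + g s) ^ 2)
        = A * (lam * lam) + (2 * B) * lam + C := by
      rw [intervalIntegral.integral_congr
        (g := fun s => (lam * lam) * f s ^ 2 + (2 * lam) * (f s * g s) + g s ^ 2)
        (fun s _ => by ring)]
      rw [intervalIntegral.integral_add ((hif.const_mul _).add (hifg.const_mul _)) hig,
        intervalIntegral.integral_add (hif.const_mul _) (hifg.const_mul _),
        intervalIntegral.integral_const_mul, intervalIntegral.integral_const_mul]
      ring
    linarith [h2 ▸ h1]
  have hdisc := discrim_le_zero hquad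
  have hBsq : B ^ 2 ≤ A * C := by
    rw [discrim] at hdisc; nlinarith
  calc |B| = Real.sqrt (B ^ 2) := (Real.sqrt_sq_eq_abs B).symm
    _ ≤ Real.sqrt (A * C) := Real.sqrt_le_sqrt hBsq
    _ = Real.sqrt A * Real.sqrt C := Real.sqrt_mul hA C

lemma rpow_self_of_twothirds (x : ℝ) (hx : 0 ≤ x) :
    (x ^ ((2:ℝ)/3)) ^ ((3:ℝ)/2) = x := by
  rw [← Real.rpow_mul hx]; norm_num

lemma rpow_three_halves_le (α β : ℝ) (hα : 0 ≤ α) (hβ : 0 ≤ β) :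
    α ^ ((3:ℝ)/2) ≤ α * (α + β) ^ ((1:ℝ)/2) := by
  have h1 : α ^ ((3:ℝ)/2) = α * α ^ ((1:ℝ)/2) := by
    rw [← Real.rpow_one_add' hα (by norm_num)]; norm_num
  rw [h1]
  exact mul_le_mul_of_nonneg_left
    (Real.rpow_le_rpow hα (le_add_of_nonneg_right hβ) (by norm_num)) hα

lemma rpow_three_halves_split (γ : ℝ) (hγ : 0 ≤ γ) :
    γ ^ ((3:ℝ)/2) = γ * γ ^ ((1:ℝ)/2) := by
  rw [← Real.rpow_one_add' hγ (by norm_num)]; norm_num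

set_option maxHeartbeats 2000000 in
theorem linear_string_bidirectional (k a b : ℝ) (hk : 0 < k)
    (Θ : ℝ) (hΘdef : Θ = (|a| ^ ((2:ℝ)/3) + |b| ^ ((2:ℝ)/3)) ^ ((3:ℝ)/2)) (hΘ : Θ < k) :
    ∀ (n : ℕ) (hn : 1 ≤ n), ∀ u w : ℝ → ℝ,
      ContinuousOn u (Set.Ici 0) → ContinuousOn w (Set.Ici 0) →
      ∀ ξ : ℕ → ℝ, ∀ x : ℕ → ℝ → ℝ,
        (∀ t, x 0 t = u t) → (∀ t, x (n + 1) t = w t) →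
        (∀ i, 1 ≤ i → i ≤ n → x i 0 = ξ i ∧
          ∀ t ≥ (0:ℝ), HasDerivAt (x i)
            (a * x (i - 1) t - k * x i t + b * x (i + 1) t) t) →
        ∀ i, 1 ≤ i → i ≤ n → ∀ t ≥ (0:ℝ),
          l2Norm (x i) t ≤
            (|a| ^ ((2:ℝ)/3) * (|a| ^ ((2:ℝ)/3) + |b| ^ ((2:ℝ)/3)) ^ ((1:ℝ)/2) / (k - Θ)) *
              l2Norm u t +
            (|b| ^ ((2:ℝ)/3) * (|a| ^ ((2:ℝ)/3) + |b| ^ ((2:ℝ)/3)) ^ ((1:ℝ)/2) / (k - Θ)) *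
              l2Norm w t +
            (Real.sqrt k / (k - Θ)) *
              ((Finset.Icc 1 n).sup' (Finset.nonempty_Icc.mpr hn) fun j => |ξ j|) := by
  intro n hn u w hu hw ξ x hx0 hxn hsol i hi1 hin t ht
  have huIcc : Set.uIcc (0:ℝ) t = Set.Icc 0 t := Set.uIcc_of_le ht
  have hsubIci : Set.Icc (0:ℝ) t ⊆ Set.Ici 0 := Set.Icc_subset_Ici_self
  -- abbreviations
  set α : ℝ := |a| ^ ((2:ℝ)/3) with hαdef
  set β : ℝ := |b| ^ ((2:ℝ)/3) with hβdef
  have hα0 : 0 ≤ α := Real.rpow_nonneg (abs_nonneg a) _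
  have hβ0 : 0 ≤ β := Real.rpow_nonneg (abs_nonneg b) _
  have ha_le : |a| ≤ α * (α + β) ^ ((1:ℝ)/2) := by
    calc |a| = (|a| ^ ((2:ℝ)/3)) ^ ((3:ℝ)/2) :=
          (rpow_self_of_twothirds _ (abs_nonneg a)).symm
      _ ≤ α * (α + β) ^ ((1:ℝ)/2) := rpow_three_halves_le α β hα0 hβ0
  have hb_le : |b| ≤ β * (α + β) ^ ((1:ℝ)/2) := by
    calc |b| = (|b| ^ ((2:ℝ)/3)) ^ ((3:ℝ)/2) :=
          (rpow_self_of_twothirds _ (abs_nonneg b)).symm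
      _ ≤ β * (β + α) ^ ((1:ℝ)/2) := rpow_three_halves_le β α hβ0 hα0
      _ = β * (α + β) ^ ((1:ℝ)/2) := by rw [add_comm]
  have habΘ : |a| + |b| ≤ Θ := by
    have := rpow_three_halves_split (α + β) (by positivity)
    rw [hΘdef, this]
    calc |a| + |b| ≤ α * (α + β) ^ ((1:ℝ)/2) + β * (α + β) ^ ((1:ℝ)/2) :=
          add_le_add ha_le hb_le
      _ = (α + β) * (α + β) ^ ((1:ℝ)/2) := by ring
  have hkσ : 0 < k - (|a| + |b|) := by linarith
  have hkΘ : 0 < k - Θ := by linarith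
  set M : ℝ := (Finset.Icc 1 n).sup' (Finset.nonempty_Icc.mpr hn) fun j => |ξ j| with hMdef
  have hMi : ∀ j, 1 ≤ j → j ≤ n → |ξ j| ≤ M := by
    intro j h1 h2
    rw [hMdef]
    exact Finset.le_sup' (fun j => |ξ j|) (Finset.mem_Icc.mpr ⟨h1, h2⟩)
  have hM0 : 0 ≤ M := le_trans (abs_nonneg (ξ 1)) (hMi 1 le_rfl hn)
  set N : ℕ → ℝ := fun j => l2Norm (x j) t with hNdef
  have hN0 : ∀ j, 0 ≤ N j := fun j => Real.sqrt_nonneg _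
  have hNut : (0:ℝ) ≤ l2Norm u t := Real.sqrt_nonneg _
  have hNwt : (0:ℝ) ≤ l2Norm w t := Real.sqrt_nonneg _
  have hNu : N 0 = l2Norm u t := by simp only [hNdef, l2Norm, hx0]
  have hNw : N (n+1) = l2Norm w t := by simp only [hNdef, l2Norm, hxn]
  -- continuity of all x j on [0,t]
  have hcont : ∀ j, j ≤ n + 1 → ContinuousOn (x j) (Set.Icc 0 t) := by
    intro j hj
    rcases Nat.eq_zero_or_pos j with h0 | h1
    · subst h0
      exact (hu.mono hsubIci).congr (fun s _ => hx0 s)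
    · rcases eq_or_lt_of_le hj with hj' | hj'
      · subst hj'
        exact (hw.mono hsubIci).congr (fun s _ => hxn s)
      · have h2 : j ≤ n := by omega
        exact fun s hs =>
          (((hsol j h1 h2).2 s hs.1).continuousAt).continuousWithinAt
  have hNsq : ∀ j, j ≤ n + 1 → (N j) ^ 2 = ∫ s in (0:ℝ)..t, x j s ^ 2 := by
    intro j hj
    exact Real.sq_sqrt (intervalIntegral.integral_nonneg ht (fun s _ => sq_nonneg _))
  -- key energy estimate
  have key : ∀ j, 1 ≤ j → j ≤ n →
      k * (N j) ^ 2 ≤ M ^ 2 / 2 + |a| * (N (j-1) * N j) + |b| * (N (j+1) * N j) := by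
    intro j h1 h2
    have hjm : j - 1 ≤ n + 1 := by omega
    have hjp : j + 1 ≤ n + 1 := by omega
    have hcm := hcont (j-1) hjm
    have hcj := hcont j (by omega)
    have hcp := hcont (j+1) hjp
    have hD : ∀ s ∈ Set.uIcc (0:ℝ) t, HasDerivAt (fun τ => x j τ ^ 2)
        (2 * x j s * (a * x (j-1) s - k * x j s + b * x (j+1) s)) s := by
      intro s hs
      rw [huIcc] at hs
      have h := ((hsol j h1 h2).2 s hs.1).pow 2
      simp at h
      exact h
    have hintD : IntervalIntegrable
        (fun s => 2 * x j s * (a * x (j-1) s - k * x j s + b * x (j+1) s))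
        MeasureTheory.volume 0 t := by
      apply ContinuousOn.intervalIntegrable
      rw [huIcc]
      exact (continuousOn_const.mul hcj).mul
        (((continuousOn_const.mul hcm).sub (continuousOn_const.mul hcj)).add
          (continuousOn_const.mul hcp))
    have hFTC := intervalIntegral.integral_eq_sub_of_hasDerivAt hD hintD
    -- integrabilities of the three products
    have him : IntervalIntegrable (fun s => x (j-1) s * x j s) MeasureTheory.volume 0 t :=
      ContinuousOn.intervalIntegrable (by rw [huIcc]; exact hcm.mul hcj)
    have hij : IntervalIntegrable (fun s => x j s ^ 2) MeasureTheory.volume 0 t :=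
      ContinuousOn.intervalIntegrable (by rw [huIcc]; exact hcj.pow 2)
    have hip : IntervalIntegrable (fun s => x (j+1) s * x j s) MeasureTheory.volume 0 t :=
      ContinuousOn.intervalIntegrable (by rw [huIcc]; exact hcp.mul hcj)
    set Bm := ∫ s in (0:ℝ)..t, x (j-1) s * x j s with hBmdef
    set A := ∫ s in (0:ℝ)..t, x j s ^ 2 with hAdef
    set Bp := ∫ s in (0:ℝ)..t, x (j+1) s * x j s with hBpdef
    have hexp : (∫ s in (0:ℝ)..t,
        2 * x j s * (a * x (j-1) s - k * x j s + b * x (j+1) s))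
        = 2 * a * Bm - 2 * k * A + 2 * b * Bp := by
      rw [intervalIntegral.integral_congr
        (g := fun s => (2*a) * (x (j-1) s * x j s) - (2*k) * (x j s ^ 2)
          + (2*b) * (x (j+1) s * x j s)) (fun s _ => by ring)]
      rw [intervalIntegral.integral_add ((him.const_mul _).sub (hij.const_mul _))
        (hip.const_mul _),
        intervalIntegral.integral_sub (him.const_mul _) (hij.const_mul _),
        intervalIntegral.integral_const_mul, intervalIntegral.integral_const_mul,
        intervalIntegral.integral_const_mul]
    have hEq : 2 * a * Bm - 2 * k * A + 2 * b * Bp = x j t ^ 2 - ξ j ^ 2 := by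
      rw [← hexp, hFTC, (hsol j h1 h2).1]
    -- Cauchy--Schwarz bounds
    have hcsm : |Bm| ≤ N (j-1) * N j := cs_interval _ _ t ht hcm hcj
    have hcsp : |Bp| ≤ N (j+1) * N j := cs_interval _ _ t ht hcp hcj
    have f1 : a * Bm ≤ |a| * (N (j-1) * N j) := by
      calc a * Bm ≤ |a * Bm| := le_abs_self _
        _ = |a| * |Bm| := abs_mul a Bm
        _ ≤ |a| * (N (j-1) * N j) := mul_le_mul_of_nonneg_left hcsm (abs_nonneg a)
    have f2 : b * Bp ≤ |b| * (N (j+1) * N j) := by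
      calc b * Bp ≤ |b * Bp| := le_abs_self _
        _ = |b| * |Bp| := abs_mul b Bp
        _ ≤ |b| * (N (j+1) * N j) := mul_le_mul_of_nonneg_left hcsp (abs_nonneg b)
    have f3 : ξ j ^ 2 ≤ M ^ 2 := by
      rw [← sq_abs (ξ j)]
      exact pow_le_pow_left₀ (abs_nonneg _) (hMi j h1 h2) 2
    have f4 : (0:ℝ) ≤ x j t ^ 2 := sq_nonneg _
    have hNA : (N j) ^ 2 = A := hNsq j (by omega)
    rw [hNA]
    linarith
  -- quadratic step
  set c : ℝ := M / Real.sqrt (2*k) with hcdef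
  have hsk : 0 < Real.sqrt (2*k) := Real.sqrt_pos.mpr (by linarith)
  have hc0 : 0 ≤ c := div_nonneg hM0 hsk.le
  have hc2 : k * c ^ 2 = M ^ 2 / 2 := by
    rw [hcdef, div_pow, Real.sq_sqrt (by linarith : (0:ℝ) ≤ 2*k)]
    field_simp
  have step2 : ∀ j, 1 ≤ j → j ≤ n →
      N j ≤ (|a| * N (j-1) + |b| * N (j+1)) / k + c := by
    intro j h1 h2
    have hBnn : 0 ≤ |a| * N (j-1) + |b| * N (j+1) :=
      add_nonneg (mul_nonneg (abs_nonneg a) (hN0 _)) (mul_nonneg (abs_nonneg b) (hN0 _))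
    by_cases hNc : N j ≤ c
    · calc N j ≤ c := hNc
        _ ≤ (|a| * N (j-1) + |b| * N (j+1)) / k + c :=
          le_add_of_nonneg_left (div_nonneg hBnn hk.le)
    · push_neg at hNc
      have hpos : 0 < N j := lt_of_le_of_lt hc0 hNc
      have hkey := key j h1 h2
      have h1' : k * (N j) ^ 2 ≤ k * c * N j
          + (|a| * (N (j-1) * N j) + |b| * (N (j+1) * N j)) := by
        have : M ^ 2 / 2 ≤ k * c * N j := by
          rw [← hc2]
          have : c * c ≤ c * N j := mul_le_mul_of_nonneg_left hNc.le hc0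
          nlinarith
        linarith
      have h1'' : (k * N j) * N j
          ≤ (k * c + (|a| * N (j-1) + |b| * N (j+1))) * N j := by
        have e1 : (k * N j) * N j = k * N j ^ 2 := by ring
        have e2 : (k * c + (|a| * N (j-1) + |b| * N (j+1))) * N j
            = k * c * N j + (|a| * (N (j-1) * N j) + |b| * (N (j+1) * N j)) := by ring
        rw [e1, e2]; exact h1'
      have h3' := le_of_mul_le_mul_right h1'' hpos
      calc N j = (k * N j) / k := (mul_div_cancel_left₀ _ hk.ne').symm
        _ ≤ (k * c + (|a| * N (j-1) + |b| * N (j+1))) / k := by gcongr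
        _ = (|a| * N (j-1) + |b| * N (j+1)) / k + c := by
            rw [add_div, mul_div_cancel_left₀ _ hk.ne', add_comm]
  -- max / small-gain argument
  obtain ⟨i0, hi0mem, hi0⟩ :=
    Finset.exists_mem_eq_sup' (Finset.nonempty_Icc.mpr hn) (fun j => N j)
  set S : ℝ := (Finset.Icc 1 n).sup' (Finset.nonempty_Icc.mpr hn) (fun j => N j) with hSdef
  obtain ⟨hi01, hi0n⟩ := Finset.mem_Icc.mp hi0mem
  have hS0 : 0 ≤ S := hi0 ▸ hN0 i0
  have hSle : ∀ j, 1 ≤ j → j ≤ n → N j ≤ S := by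
    intro j h1 h2
    rw [hSdef]
    exact Finset.le_sup' (fun j => N j) (Finset.mem_Icc.mpr ⟨h1, h2⟩)
  have hm : N (i0 - 1) ≤ l2Norm u t + S := by
    rcases eq_or_lt_of_le hi01 with h | h
    · have h0 : i0 - 1 = 0 := by omega
      rw [h0, hNu]
      exact le_add_of_nonneg_right hS0
    · have : 1 ≤ i0 - 1 := by omega
      calc N (i0 - 1) ≤ S := hSle _ this (by omega)
        _ ≤ l2Norm u t + S := le_add_of_nonneg_left hNut
  have hp : N (i0 + 1) ≤ l2Norm w t + S := by
    rcases eq_or_lt_of_le hi0n with h | h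
    · rw [h, hNw]
      exact le_add_of_nonneg_right hS0
    · calc N (i0 + 1) ≤ S := hSle _ (by omega) (by omega)
        _ ≤ l2Norm w t + S := le_add_of_nonneg_left hNwt
  have hstep := step2 i0 hi01 hi0n
  rw [← hi0] at hstep
  have hmulk : (S - c) * k ≤ |a| * N (i0 - 1) + |b| * N (i0 + 1) := by
    rw [← le_div_iff₀ hk]
    linarith
  have hDle : |a| * N (i0 - 1) + |b| * N (i0 + 1)
      ≤ |a| * (l2Norm u t + S) + |b| * (l2Norm w t + S) :=
    add_le_add (mul_le_mul_of_nonneg_left hm (abs_nonneg a))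
      (mul_le_mul_of_nonneg_left hp (abs_nonneg b))
  have hSbound : (k - (|a| + |b|)) * S ≤ |a| * l2Norm u t + |b| * l2Norm w t + k * c := by
    linarith [hmulk, hDle]
  have hSB : S ≤ (|a| * l2Norm u t + |b| * l2Norm w t + k * c) / (k - (|a| + |b|)) := by
    rw [le_div_iff₀ hkσ]
    linarith
  -- compare constants
  have hkc : k * c ≤ Real.sqrt k * M := by
    have h1 : Real.sqrt k * Real.sqrt (2*k) = Real.sqrt 2 * k := by
      rw [← Real.sqrt_mul hk.le]
      have hkk : k * (2*k) = 2 * k^2 := by ring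
      rw [hkk, Real.sqrt_mul (by norm_num : (0:ℝ) ≤ 2), Real.sqrt_sq hk.le]
    have h2 : (1:ℝ) ≤ Real.sqrt 2 := by
      calc (1:ℝ) = Real.sqrt 1 := Real.sqrt_one.symm
        _ ≤ Real.sqrt 2 := Real.sqrt_le_sqrt (by norm_num)
    have h3 : Real.sqrt k * M * Real.sqrt (2*k) = Real.sqrt 2 * (k * M) := by
      rw [mul_right_comm, h1]; ring
    rw [hcdef, mul_div_assoc']
    rw [div_le_iff₀ hsk, h3]
    linarith [mul_le_mul_of_nonneg_right h2 (mul_nonneg hk.le hM0)]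
  have hpa0 : 0 ≤ α * (α + β) ^ ((1:ℝ)/2) :=
    mul_nonneg hα0 (Real.rpow_nonneg (by positivity) _)
  have hpb0 : 0 ≤ β * (α + β) ^ ((1:ℝ)/2) :=
    mul_nonneg hβ0 (Real.rpow_nonneg (by positivity) _)
  have hnum : |a| * l2Norm u t + |b| * l2Norm w t + k * c
      ≤ (α * (α + β) ^ ((1:ℝ)/2)) * l2Norm u t
        + (β * (α + β) ^ ((1:ℝ)/2)) * l2Norm w t + Real.sqrt k * M :=
    add_le_add (add_le_add (mul_le_mul_of_nonneg_right ha_le hNut)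
      (mul_le_mul_of_nonneg_right hb_le hNwt)) hkc
  have hnum2nn : 0 ≤ (α * (α + β) ^ ((1:ℝ)/2)) * l2Norm u t
      + (β * (α + β) ^ ((1:ℝ)/2)) * l2Norm w t + Real.sqrt k * M :=
    add_nonneg (add_nonneg (mul_nonneg hpa0 hNut) (mul_nonneg hpb0 hNwt))
      (mul_nonneg (Real.sqrt_nonneg k) hM0)
  have hdiv : (|a| * l2Norm u t + |b| * l2Norm w t + k * c) / (k - (|a| + |b|))
      ≤ ((α * (α + β) ^ ((1:ℝ)/2)) * l2Norm u t
        + (β * (α + β) ^ ((1:ℝ)/2)) * l2Norm w t + Real.sqrt k * M) / (k - Θ) :=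
    div_le_div₀ hnum2nn hnum hkΘ (by linarith)
  have hRHS : (α * (α + β) ^ ((1:ℝ)/2) / (k - Θ)) * l2Norm u t
      + (β * (α + β) ^ ((1:ℝ)/2) / (k - Θ)) * l2Norm w t
      + (Real.sqrt k / (k - Θ)) * M
      = ((α * (α + β) ^ ((1:ℝ)/2)) * l2Norm u t
        + (β * (α + β) ^ ((1:ℝ)/2)) * l2Norm w t + Real.sqrt k * M) / (k - Θ) := by
    rw [div_mul_eq_mul_div, div_mul_eq_mul_div, div_mul_eq_mul_div,
      ← add_div, ← add_div]
  calc l2Norm (x i) t = N i := rfl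
    _ ≤ S := hSle i hi1 hin
    _ ≤ (|a| * l2Norm u t + |b| * l2Norm w t + k * c) / (k - (|a| + |b|)) := hSB
    _ ≤ _ := hdiv
    _ = _ := hRHS.symm
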